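/- Let S = {x ∈ ℓ¹ : x_0 = 0 and ∑_{k=1}^∞ x_k = 0}, and let y = (1,1,0,0,…) ∈ ℓ¹. Then inf_{x ∈ S} ‖y − x‖₁ = 2, attained at x = 0, while sup{⟨ν,y⟩ : ν ∈ ^⊥S, ‖ν‖_∞ ≤ 1} = 1. In particular the predual duality formula fails even though ^⊥S ≠ {0}. -/

import Mathlib

open scoped ENNReal

namespace DualityFailAux

noncomputable def y : lp (fun _ : ℕ => ℝ) 1 := lp.single 1 0 (1:ℝ) + lp.single 1 1 (1:ℝ)

lemma y_apply (k : ℕ) : (y : ℕ → ℝ) k = if k = 0 then 1 else if k = 1 then 1 else 0 := by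
  simp only [y, lp.coeFn_add, Pi.add_apply, lp.single_apply]
  rcases k with _ | _ | k <;> simp

lemma norm_eq (f : lp (fun _ : ℕ => ℝ) 1) : ‖f‖ = ∑' k, |(f : ℕ → ℝ) k| := by
  have := lp.norm_eq_tsum_rpow (p := 1) (by norm_num) f
  simpa [Real.norm_eq_abs] using this

lemma summable_abs (f : lp (fun _ : ℕ => ℝ) 1) : Summable (fun k => |(f : ℕ → ℝ) k|) := by
  have := (lp.memℓp f).summable (p := 1) (by norm_num)
  simpa [Real.norm_eq_abs] using this

lemma summable_coe (f : lp (fun _ : ℕ => ℝ) 1) : Summable (fun k => (f : ℕ → ℝ) k) :=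
  (summable_abs f).of_abs

lemma norm_y : ‖y‖ = 2 := by
  rw [norm_eq]
  rw [tsum_eq_sum (s := {0, 1}) (f := fun k => |(y : ℕ → ℝ) k|)
    (by intro b hb; simp only [Finset.mem_insert, Finset.mem_singleton, not_or] at hb
        simp only []; rw [y_apply]; simp [hb.1, hb.2])]
  simp [y_apply]; norm_num

lemma dist_ge (x : lp (fun _ : ℕ => ℝ) 1) (hx : (x : ℕ → ℝ) 0 = 0)
    (hs : ∑' k : ℕ, (x : ℕ → ℝ) (k + 1) = 0) : (2:ℝ) ≤ dist y x := by
  rw [dist_eq_norm, norm_eq]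
  have hsub : ∀ k, ((y - x : lp (fun _ : ℕ => ℝ) 1) : ℕ → ℝ) k
      = (y : ℕ → ℝ) k - (x : ℕ → ℝ) k := by
    intro k; simp [lp.coeFn_sub]
  have hsum : Summable (fun k => |((y - x : lp (fun _ : ℕ => ℝ) 1) : ℕ → ℝ) k|) :=
    summable_abs _
  rw [Summable.tsum_eq_zero_add hsum, Summable.tsum_eq_zero_add ((summable_nat_add_iff 1).2 hsum)]
  have h0 : |((y - x : lp (fun _ : ℕ => ℝ) 1) : ℕ → ℝ) 0| = 1 := by
    rw [hsub, y_apply, hx]; norm_num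
  have h1 : |((y - x : lp (fun _ : ℕ => ℝ) 1) : ℕ → ℝ) 1| = |1 - (x : ℕ → ℝ) 1| := by
    rw [hsub, y_apply]; norm_num
  have h2 : ∀ k, |((y - x : lp (fun _ : ℕ => ℝ) 1) : ℕ → ℝ) (k + 1 + 1)|
      = |(x : ℕ → ℝ) (k + 2)| := by
    intro k; rw [hsub, y_apply]; norm_num
  rw [h0, h1]
  simp only [h2]
  have hxs : Summable (fun k => (x : ℕ → ℝ) (k + 1)) :=
    (summable_nat_add_iff 1).2 (summable_coe x)
  have hsplit := Summable.tsum_eq_zero_add hxs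
  rw [hs] at hsplit
  have htail : ∑' k, (x : ℕ → ℝ) (k + 1 + 1) = -(x : ℕ → ℝ) 1 := by linarith
  have habs : |(x : ℕ → ℝ) 1| ≤ ∑' k, |(x : ℕ → ℝ) (k + 2)| := by
    have := norm_tsum_le_tsum_norm (f := fun k => (x : ℕ → ℝ) (k + 1 + 1))
      (by simpa [Real.norm_eq_abs] using (summable_nat_add_iff 2).2 (summable_abs x))
    rw [htail] at this
    simpa [Real.norm_eq_abs] using this
  have h3 : (1:ℝ) ≤ |1 - (x : ℕ → ℝ) 1| + |(x : ℕ → ℝ) 1| := by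
    have := abs_add_le (1 - (x : ℕ → ℝ) 1) ((x : ℕ → ℝ) 1)
    simpa using this
  linarith

noncomputable def ν₀ : lp (fun _ : ℕ => ℝ) ⊤ := lp.single ⊤ 0 (1:ℝ)

lemma ν₀_apply (k : ℕ) : (ν₀ : ℕ → ℝ) k = if k = 0 then 1 else 0 := by
  rcases k with _ | k
  · simp [ν₀, lp.single_apply_self]
  · simp [ν₀, lp.single_apply_ne _ _ _ (by omega : (k+1:ℕ) ≠ 0)]

lemma ν₀_tendsto : Filter.Tendsto (fun k => (ν₀ : ℕ → ℝ) k) Filter.atTop (nhds 0) := by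
  apply Filter.Tendsto.congr' _ tendsto_const_nhds
  filter_upwards [Filter.eventually_ge_atTop 1] with k hk
  rw [ν₀_apply, if_neg (by omega : ¬ k = 0)]

lemma ν₀_norm : ‖ν₀‖ ≤ 1 := by
  apply lp.norm_le_of_forall_le zero_le_one
  intro i; rw [ν₀_apply]; split <;> simp

noncomputable def t (i : ℕ) : lp (fun _ : ℕ => ℝ) 1 :=
  lp.single 1 (i+1) (1:ℝ) + lp.single 1 (i+2) (-1:ℝ)

lemma t_apply (i k : ℕ) :
    ((t i : lp (fun _ : ℕ => ℝ) 1) : ℕ → ℝ) k =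
      if k = i+1 then 1 else if k = i+2 then -1 else 0 := by
  simp only [t, lp.coeFn_add, Pi.add_apply]
  by_cases h1 : k = i+1
  · subst h1
    rw [lp.single_apply_self, lp.single_apply_ne _ _ _ (by omega : i+1 ≠ i+2)]
    simp
  · by_cases h2 : k = i+2
    · subst h2
      rw [lp.single_apply_self, lp.single_apply_ne _ _ _ (by omega : i+2 ≠ i+1)]
      simp [h1]
    · rw [lp.single_apply_ne _ _ _ h1, lp.single_apply_ne _ _ _ h2]
      simp [h1, h2]

lemma t_mem (i : ℕ) : ((t i : lp (fun _ : ℕ => ℝ) 1) : ℕ → ℝ) 0 = 0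
    ∧ ∑' k : ℕ, ((t i : lp (fun _ : ℕ => ℝ) 1) : ℕ → ℝ) (k + 1) = 0 := by
  constructor
  · rw [t_apply]; simp
  · rw [tsum_eq_sum (s := {i, i+1})
      (by intro b hb
          simp only [Finset.mem_insert, Finset.mem_singleton, not_or] at hb
          rw [t_apply]
          have h1 : ¬ b+1 = i+1 := by omega
          have h2 : ¬ b+1 = i+2 := by omega
          simp [h1, h2, hb.1, hb.2])]
    rw [Finset.sum_pair (by omega : i ≠ i+1)]
    rw [t_apply, t_apply]
    simp

end DualityFailAux

open DualityFailAux in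
/-- For `S = {x ∈ ℓ¹ : x_0 = 0, ∑_{k≥1} x_k = 0}` and `y = (1,1,0,0,…)`:
the distance from `y` to `S` is 2, attained at `x = 0 ∈ S`, while the supremum
of `⟨ν,y⟩` over the unit ball of the pre-annihilator of `S` in c₀ equals 1.
Thus the predual duality formula fails even though the pre-annihilator is nontrivial. -/
theorem duality_fails_for_tail_sum_zero_subspace :
    Metric.infDist
        ((lp.single 1 0 (1:ℝ) + lp.single 1 1 (1:ℝ)) : lp (fun _ : ℕ => ℝ) 1)
        {x : lp (fun _ : ℕ => ℝ) 1 | x 0 = 0 ∧ ∑' k : ℕ, x (k + 1) = 0} = 2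
      ∧ (0 : lp (fun _ : ℕ => ℝ) 1)
          ∈ {x : lp (fun _ : ℕ => ℝ) 1 | x 0 = 0 ∧ ∑' k : ℕ, x (k + 1) = 0}
      ∧ ‖((lp.single 1 0 (1:ℝ) + lp.single 1 1 (1:ℝ)) : lp (fun _ : ℕ => ℝ) 1) - 0‖ = 2
      ∧ sSup {r : ℝ | ∃ ν : lp (fun _ : ℕ => ℝ) ⊤,
            Filter.Tendsto (fun k => ν k) Filter.atTop (nhds 0)
            ∧ (∀ x ∈ {x : lp (fun _ : ℕ => ℝ) 1 | x 0 = 0 ∧ ∑' k : ℕ, x (k + 1) = 0},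
                ∑' k : ℕ, ν k * x k = 0)
            ∧ ‖ν‖ ≤ 1
            ∧ r = ∑' k : ℕ,
                ν k * ((lp.single 1 0 (1:ℝ) + lp.single 1 1 (1:ℝ)) : lp (fun _ : ℕ => ℝ) 1) k}
          = 1 := by
  have hy : ((lp.single 1 0 (1:ℝ) + lp.single 1 1 (1:ℝ)) : lp (fun _ : ℕ => ℝ) 1) = y := rfl
  have h0mem : (0 : lp (fun _ : ℕ => ℝ) 1)
      ∈ {x : lp (fun _ : ℕ => ℝ) 1 | x 0 = 0 ∧ ∑' k : ℕ, x (k + 1) = 0} := by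
    constructor
    · simp [lp.coeFn_zero]
    · simp [lp.coeFn_zero]
  refine ⟨?_, h0mem, ?_, ?_⟩
  · rw [hy]
    apply le_antisymm
    · calc Metric.infDist y _ ≤ dist y 0 := Metric.infDist_le_dist_of_mem (x := y) h0mem
        _ = ‖y‖ := by rw [dist_zero_right]
        _ = 2 := norm_y
    · by_contra hcon
      rw [not_le] at hcon
      obtain ⟨z, hz, hlt⟩ := (Metric.infDist_lt_iff ⟨0, h0mem⟩).1 hcon
      exact absurd hlt (not_lt.2 (dist_ge z hz.1 hz.2))
  · rw [hy, sub_zero, norm_y]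
  · -- the sup part
    have hub : ∀ r ∈ {r : ℝ | ∃ ν : lp (fun _ : ℕ => ℝ) ⊤,
            Filter.Tendsto (fun k => ν k) Filter.atTop (nhds 0)
            ∧ (∀ x ∈ {x : lp (fun _ : ℕ => ℝ) 1 | x 0 = 0 ∧ ∑' k : ℕ, x (k + 1) = 0},
                ∑' k : ℕ, ν k * x k = 0)
            ∧ ‖ν‖ ≤ 1
            ∧ r = ∑' k : ℕ,
                ν k * ((lp.single 1 0 (1:ℝ) + lp.single 1 1 (1:ℝ)) : lp (fun _ : ℕ => ℝ) 1) k},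
        r ≤ 1 := by
      rintro r ⟨ν, htend, hann, hnorm, hr⟩
      -- ν is constant on positive indices
      have hstep : ∀ i : ℕ, (ν : ℕ → ℝ) (i+1) = (ν : ℕ → ℝ) (i+2) := by
        intro i
        have h := hann (t i) ⟨(t_mem i).1, (t_mem i).2⟩
        rw [tsum_eq_sum (s := {i+1, i+2})
          (by intro b hb
              simp only [Finset.mem_insert, Finset.mem_singleton, not_or] at hb
              rw [t_apply, if_neg hb.1, if_neg hb.2, mul_zero])] at h
        rw [Finset.sum_pair (by omega : i+1 ≠ i+2), t_apply, t_apply] at h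
        rw [if_pos rfl, if_neg (by omega : ¬ i+2 = i+1), if_pos rfl] at h
        simp only [if_true, mul_one] at h
        linarith
      have hconst : ∀ n : ℕ, (ν : ℕ → ℝ) (n+1) = (ν : ℕ → ℝ) 1 := by
        intro n
        induction n with
        | zero => rfl
        | succ m ih => rw [← ih]; exact (hstep m).symm
      have hν1 : (ν : ℕ → ℝ) 1 = 0 := by
        have h1 : Filter.Tendsto (fun n : ℕ => (ν : ℕ → ℝ) (n+1)) Filter.atTop (nhds 0) :=
          htend.comp (Filter.tendsto_add_atTop_nat 1)
        have h2 : Filter.Tendsto (fun _ : ℕ => (ν : ℕ → ℝ) 1) Filter.atTop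
            (nhds ((ν : ℕ → ℝ) 1)) := tendsto_const_nhds
        have h3 : Filter.Tendsto (fun n : ℕ => (ν : ℕ → ℝ) (n+1)) Filter.atTop
            (nhds ((ν : ℕ → ℝ) 1)) := by
          apply h2.congr; intro n; exact (hconst n).symm
        exact tendsto_nhds_unique h3 h1
      rw [hy] at hr
      rw [tsum_eq_sum (s := {0, 1})
        (by intro b hb
            simp only [Finset.mem_insert, Finset.mem_singleton, not_or] at hb
            rw [y_apply, if_neg hb.1, if_neg hb.2, mul_zero])] at hr
      rw [Finset.sum_pair (by omega : (0:ℕ) ≠ 1), y_apply, y_apply] at hr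
      rw [if_pos rfl, if_neg (by omega : ¬ (1:ℕ) = 0), if_pos rfl, hν1] at hr
      simp only [if_true, mul_one, zero_mul, add_zero] at hr
      have hb : (ν : ℕ → ℝ) 0 ≤ 1 := by
        have h4 : ‖(ν : ℕ → ℝ) 0‖ ≤ ‖ν‖ := lp.norm_apply_le_norm ENNReal.top_ne_zero ν 0
        have h5 := le_abs_self ((ν : ℕ → ℝ) 0)
        rw [Real.norm_eq_abs] at h4
        linarith
      rw [hr]; linarith
    have h1mem : (1:ℝ) ∈ {r : ℝ | ∃ ν : lp (fun _ : ℕ => ℝ) ⊤,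
            Filter.Tendsto (fun k => ν k) Filter.atTop (nhds 0)
            ∧ (∀ x ∈ {x : lp (fun _ : ℕ => ℝ) 1 | x 0 = 0 ∧ ∑' k : ℕ, x (k + 1) = 0},
                ∑' k : ℕ, ν k * x k = 0)
            ∧ ‖ν‖ ≤ 1
            ∧ r = ∑' k : ℕ,
                ν k * ((lp.single 1 0 (1:ℝ) + lp.single 1 1 (1:ℝ)) : lp (fun _ : ℕ => ℝ) 1) k} := by
      refine ⟨ν₀, ν₀_tendsto, ?_, ν₀_norm, ?_⟩
      · rintro x ⟨hx0, -⟩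
        have : (fun k : ℕ => (ν₀ : ℕ → ℝ) k * (x : ℕ → ℝ) k) = fun _ => (0:ℝ) := by
          funext k
          rcases Nat.eq_zero_or_pos k with h | h
          · subst h; rw [ν₀_apply, if_pos rfl, one_mul, hx0]
          · rw [ν₀_apply, if_neg (by omega : ¬ k = 0), zero_mul]
        rw [this, tsum_zero]
      · rw [hy]
        rw [tsum_eq_single 0
          (by intro b hb; rw [ν₀_apply, if_neg hb, zero_mul])]
        rw [ν₀_apply, y_apply]; norm_num
    exact le_antisymm (csSup_le ⟨1, h1mem⟩ hub) (le_csSup ⟨1, hub⟩ h1mem)
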